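/- Let x ∈ ℂ, let c₁, c₂ ∈ ℝ, and let η₁, η₂ be nonzero real parameters. Assume all hyperbolic sines appearing in the denominators below are nonzero. Then: (1) h⁻(x − iħc₂/4; η₁, c₁) = h⁻(x; η₁, c₁ + c₂); and (2) G(x − iħ(c₁ + c₂)/4; η₁, η₂)·h⁻(x − iħc₁/4; η₂, c₂) = h⁻(x; η₁, c₁ + c₂). -/

import Mathlib

/-- The structure function `h⁻(x; η, c)` of the `H⁻ E` exchange relation of
`A_{ħ,η}(ĝ)`, with `b = B_{ij}` and `hbar = ħ`. -/
noncomputable def hmFn (hbar b η c : ℝ) (x : ℂ) : ℂ :=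
  Complex.sinh ((Real.pi : ℂ) * (η : ℂ) * (x - Complex.I * (hbar : ℂ) * ((b : ℂ) + (c : ℂ) / 4))) /
    Complex.sinh ((Real.pi : ℂ) * (η : ℂ) * (x + Complex.I * (hbar : ℂ) * ((b : ℂ) - (c : ℂ) / 4)))

/-- The structure function `G(x; η, η̃)` of the `H^± H^±` exchange relation of
`A_{ħ,η}(ĝ)`, with `b = B_{ij}` and `hbar = ħ`. -/
noncomputable def Gfn (hbar b η η' : ℝ) (x : ℂ) : ℂ :=
  (Complex.sinh ((Real.pi : ℂ) * (η : ℂ) * (x - Complex.I * (hbar : ℂ) * (b : ℂ))) *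
      Complex.sinh ((Real.pi : ℂ) * (η' : ℂ) * (x + Complex.I * (hbar : ℂ) * (b : ℂ)))) /
    (Complex.sinh ((Real.pi : ℂ) * (η : ℂ) * (x + Complex.I * (hbar : ℂ) * (b : ℂ))) *
      Complex.sinh ((Real.pi : ℂ) * (η' : ℂ) * (x - Complex.I * (hbar : ℂ) * (b : ℂ))))

/-- the scalar identities verifying that `Δ⁺` preserves the `H⁻–E`
exchange relation: (1) `h⁻(x − iħc₂/4; η₁, c₁) = h⁻(x; η₁, c₁ + c₂)` (the term `E⊗1`), and
(2) `G(x − iħ(c₁ + c₂)/4; η₁, η₂)·h⁻(x − iħc₁/4; η₂, c₂) = h⁻(x; η₁, c₁ + c₂)`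
(the term `H⁻⊗E`). -/
theorem hmFn_coproduct (hbar b : ℝ) (x : ℂ) (c₁ c₂ : ℝ) (η₁ η₂ : ℝ)
    (h₁ : η₁ ≠ 0) (h₂ : η₂ ≠ 0)
    (hd1 : Complex.sinh ((Real.pi : ℂ) * (η₁ : ℂ) *
      ((x - Complex.I * (hbar : ℂ) * (c₂ : ℂ) / 4) +
        Complex.I * (hbar : ℂ) * ((b : ℂ) - (c₁ : ℂ) / 4))) ≠ 0)
    (hd2 : Complex.sinh ((Real.pi : ℂ) * (η₁ : ℂ) *
      (x + Complex.I * (hbar : ℂ) * ((b : ℂ) - ((c₁ : ℂ) + (c₂ : ℂ)) / 4))) ≠ 0)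
    (hd3 : Complex.sinh ((Real.pi : ℂ) * (η₁ : ℂ) *
      ((x - Complex.I * (hbar : ℂ) * ((c₁ : ℂ) + (c₂ : ℂ)) / 4) +
        Complex.I * (hbar : ℂ) * (b : ℂ))) ≠ 0)
    (hd4 : Complex.sinh ((Real.pi : ℂ) * (η₂ : ℂ) *
      ((x - Complex.I * (hbar : ℂ) * ((c₁ : ℂ) + (c₂ : ℂ)) / 4) -
        Complex.I * (hbar : ℂ) * (b : ℂ))) ≠ 0)
    (hd5 : Complex.sinh ((Real.pi : ℂ) * (η₂ : ℂ) *
      ((x - Complex.I * (hbar : ℂ) * (c₁ : ℂ) / 4) +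
        Complex.I * (hbar : ℂ) * ((b : ℂ) - (c₂ : ℂ) / 4))) ≠ 0) :
    hmFn hbar b η₁ c₁ (x - Complex.I * (hbar : ℂ) * (c₂ : ℂ) / 4) =
        hmFn hbar b η₁ (c₁ + c₂) x ∧
      Gfn hbar b η₁ η₂ (x - Complex.I * (hbar : ℂ) * ((c₁ : ℂ) + (c₂ : ℂ)) / 4) *
          hmFn hbar b η₂ c₂ (x - Complex.I * (hbar : ℂ) * (c₁ : ℂ) / 4) =
        hmFn hbar b η₁ (c₁ + c₂) x := by
  have key1 : hmFn hbar b η₁ c₁ (x - Complex.I * (hbar : ℂ) * (c₂ : ℂ) / 4) =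
      hmFn hbar b η₁ (c₁ + c₂) x := by
    unfold hmFn
    push_cast
    congr 2 <;> ring
  refine ⟨key1, ?_⟩
  unfold hmFn Gfn
  push_cast
  set y : ℂ := x - Complex.I * (hbar : ℂ) * ((c₁ : ℂ) + (c₂ : ℂ)) / 4 with hy
  have A1 : ((Real.pi:ℂ) * η₁ * (x - Complex.I * hbar * (b + (c₁ + c₂) / 4)))
      = (Real.pi:ℂ) * η₁ * (y - Complex.I * hbar * b) := by rw [hy]; ring
  have A2 : ((Real.pi:ℂ) * η₁ * (x + Complex.I * hbar * (b - (c₁ + c₂) / 4)))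
      = (Real.pi:ℂ) * η₁ * (y + Complex.I * hbar * b) := by rw [hy]; ring
  have A3 : ((Real.pi:ℂ) * η₂ * (x - Complex.I * hbar * c₁ / 4 - Complex.I * hbar * (b + c₂ / 4)))
      = (Real.pi:ℂ) * η₂ * (y - Complex.I * hbar * b) := by rw [hy]; ring
  have A4 : ((Real.pi:ℂ) * η₂ * (x - Complex.I * hbar * c₁ / 4 + Complex.I * hbar * (b - c₂ / 4)))
      = (Real.pi:ℂ) * η₂ * (y + Complex.I * hbar * b) := by rw [hy]; ring
  have B2 : Complex.sinh ((Real.pi:ℂ) * η₁ * (y + Complex.I * hbar * b)) ≠ 0 := by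
    rw [← A2]; push_cast at hd2 ⊢; convert hd2 using 3
  have B4 : Complex.sinh ((Real.pi:ℂ) * η₂ * (y + Complex.I * hbar * b)) ≠ 0 := by
    rw [← A4]; push_cast at hd5 ⊢; convert hd5 using 3
  have B3 : Complex.sinh ((Real.pi:ℂ) * η₂ * (y - Complex.I * hbar * b)) ≠ 0 := by
    push_cast at hd4 ⊢; convert hd4 using 3
  rw [A1, A2, A3, A4]
  field_simp
  have B3' := B3
  ring_nf at B3' ⊢
  rw [mul_assoc, mul_inv_cancel₀ B3', mul_one]
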